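/- In any PBE (σ*, β*): σ^t*_h = 0 (no type h agent misbehaves), β*(h|L) = 0 and β*(l|L) = 1 (the operator believes every agent on server L is of type l), and σ^d*_L = 0 (the operator never inspects agents on server L). -/
import Mathlib


open Set

/-- Perfect Bayesian equilibrium of the two-server misbehavior-inspection signaling game.
The strategy profile is `(sh, sl, dH, dL)` (misbehavior rates of types `h` and `l`, and the
operator's inspection probabilities on servers `H` and `L`) and the belief assessment is
`(bhH, blH, bhL, blL)`. -/
def IsPBE (θ pth ptl pd Fh Fl : ℝ) (cH cL : ℝ → ℝ → ℝ)
    (sh sl dH dL bhH blH bhL blL : ℝ) : Prop :=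
  sh ∈ Icc (0:ℝ) 1 ∧ sl ∈ Icc (0:ℝ) 1 ∧ dH ∈ Icc (0:ℝ) 1 ∧ dL ∈ Icc (0:ℝ) 1 ∧
  bhH ∈ Icc (0:ℝ) 1 ∧ blH = 1 - bhH ∧ bhL ∈ Icc (0:ℝ) 1 ∧ blL = 1 - bhL ∧
  -- sequential rationality of type h agents
  (0 < sh → -(cL sh sl) - pth - Fh * dL ≥ -(cH sh sl)) ∧
  (sh < 1 → -(cL sh sl) - pth - Fh * dL ≤ -(cH sh sl)) ∧
  -- sequential rationality of type l agents
  (0 < sl → -(cH sh sl) - ptl - Fl * dH ≥ -(cL sh sl)) ∧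
  (sl < 1 → -(cH sh sl) - ptl - Fl * dH ≤ -(cL sh sl)) ∧
  -- operator optimality on servers H and L
  (∀ x ∈ Icc (0:ℝ) 1, (-pd + Fl * blH) * x ≤ (-pd + Fl * blH) * dH) ∧
  (∀ x ∈ Icc (0:ℝ) 1, (-pd + Fh * bhL) * x ≤ (-pd + Fh * bhL) * dL) ∧
  -- consistency of beliefs (Bayes' rule)
  (0 < θ * (1 - sh) + (1 - θ) * sl →
    bhH = θ * (1 - sh) / (θ * (1 - sh) + (1 - θ) * sl)) ∧
  (0 < θ * sh + (1 - θ) * (1 - sl) →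
    bhL = θ * sh / (θ * sh + (1 - θ) * (1 - sl)))

/-- In any PBE, no type h agent misbehaves, the operator believes every agent on
server L is of type l, and never inspects agents on server L. -/
theorem h_does_not_misbehave
    (θ pth ptl pd Fh Fl : ℝ) (cH cL : ℝ → ℝ → ℝ)
    (hθ : θ ∈ Ioo (0:ℝ) 1) (hpth : 0 ≤ pth) (hptl : 0 < ptl)
    (hpd : 0 < pd) (hFh : 0 ≤ Fh) (hFl : 0 ≤ Fl)
    (hA1 : cH 0 0 < cL 0 0 ∧ cL 0 1 < cH 0 1)
    (hA2Hh : ∀ y ∈ Icc (0:ℝ) 1, StrictAntiOn (fun x => cH x y) (Icc 0 1))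
    (hA2Hl : ∀ x ∈ Icc (0:ℝ) 1, StrictMonoOn (fun y => cH x y) (Icc 0 1))
    (hA2Lh : ∀ y ∈ Icc (0:ℝ) 1, StrictMonoOn (fun x => cL x y) (Icc 0 1))
    (hA2Ll : ∀ x ∈ Icc (0:ℝ) 1, StrictAntiOn (fun y => cL x y) (Icc 0 1))
    (sh sl dH dL bhH blH bhL blL : ℝ)
    (hPBE : IsPBE θ pth ptl pd Fh Fl cH cL sh sl dH dL bhH blH bhL blL)
    : sh = 0 ∧ bhL = 0 ∧ blL = 1 ∧ dL = 0 := by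
  obtain ⟨hsh, hsl, hdH, hdL, hbhH, hblH, hbhL, hblL,
    hSRh1, hSRh2, hSRl1, hSRl2, hOH, hOL, hBH, hBL⟩ := hPBE
  have h01 : (0:ℝ) ∈ Icc (0:ℝ) 1 := ⟨le_refl 0, zero_le_one⟩
  have h11 : (1:ℝ) ∈ Icc (0:ℝ) 1 := ⟨zero_le_one, le_refl 1⟩
  have hFd : 0 ≤ Fh * dL := mul_nonneg hFh hdL.1
  have hFd2 : 0 ≤ Fl * dH := mul_nonneg hFl hdH.1
  have hsh0 : sh = 0 := by
    by_contra hne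
    have hpos : 0 < sh := lt_of_le_of_ne hsh.1 (Ne.symm hne)
    have h1 := hSRh1 hpos
    have hge' : cL sh sl ≤ cH sh sl := by linarith
    rcases eq_or_lt_of_le hsl.1 with hsl0 | hslpos
    · have hH : cH sh 0 < cH 0 0 := hA2Hh 0 h01 h01 hsh hpos
      have hL : cL 0 0 < cL sh 0 := hA2Lh 0 h01 h01 hsh hpos
      rw [← hsl0] at hge'
      linarith [hA1.1]
    · have h2 := hSRl1 hslpos
      linarith
  subst hsh0
  have hsl1 : sl < 1 := by
    by_contra hs
    have hsl1 : sl = 1 := le_antisymm hsl.2 (not_lt.mp hs)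
    subst hsl1
    have h2 := hSRl1 one_pos
    linarith [hA1.2]
  have hbhL0 : bhL = 0 := by
    have hden : 0 < θ * 0 + (1 - θ) * (1 - sl) := by nlinarith [hθ.2]
    rw [hBL hden, mul_zero, zero_div]
  refine ⟨rfl, hbhL0, by rw [hblL, hbhL0]; ring, ?_⟩
  have h0 := hOL 0 h01
  rw [hbhL0] at h0
  have h0' : 0 ≤ -pd * dL := by linarith [h0]; 
  nlinarith [hdL.1, hdL.2]
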